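/- Let Q and distributions P^1,…,P^M over X be given, with non-negative coefficients φ_1,…,φ_M summing to 1. Let O be a set of distributions S over X such that d_{HΔH}(Σ_i φ_i P^i, S) ≤ max_{i,j} d_{HΔH}(P^i, P^j) for every S ∈ O. Then for any h ∈ H, ε_Q(h) ≤ λ' + Σ_i φ_i ε_{P^i}(h) + (1/2) min_{S∈O} d_{HΔH}(S, Q) + (1/2) max_{i,j} d_{HΔH}(P^i, P^j), where λ' is the sum of errors of ideal joint hypotheses appearing in the two applications of the single-source bound. -/
import Mathlib


open MeasureTheory
open scoped NNReal ENNReal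

/-- Error of a binary hypothesis `h` on a distribution `D` over `X` with
labeling function `f`. -/
noncomputable def err {X : Type*} [MeasurableSpace X] (D : Measure X)
    (f h : X → Bool) : ℝ :=
  (D {x | h x ≠ f x}).toReal

/-- The `HΔH`-divergence between two distributions `P` and `Q` over `X`. -/
noncomputable def dHDH {X : Type*} [MeasurableSpace X] (H : Set (X → Bool))
    (P Q : Measure X) : ℝ :=
  2 * sSup {r : ℝ | ∃ h ∈ H, ∃ h' ∈ H,
    r = |(P {x | h x ≠ h' x}).toReal - (Q {x | h x ≠ h' x}).toReal|}

/-- The error of the ideal joint hypothesis for distributions `P` and `Q`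
with (shared) labeling function `f`. -/
noncomputable def idealJointError {X : Type*} [MeasurableSpace X]
    (H : Set (X → Bool)) (P Q : Measure X) (f : X → Bool) : ℝ :=
  sInf {r : ℝ | ∃ h ∈ H, r = err P f h + err Q f h}

lemma tri_measure {X : Type*} [MeasurableSpace X] (μ : Measure X) [IsFiniteMeasure μ]
    {A B C : Set X} (hsub : A ⊆ B ∪ C) :
    (μ A).toReal ≤ (μ B).toReal + (μ C).toReal := by
  have h1 : μ A ≤ μ B + μ C := (measure_mono hsub).trans (measure_union_le _ _)
  rw [← ENNReal.toReal_add (measure_ne_top μ B) (measure_ne_top μ C)]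
  exact ENNReal.toReal_mono (by finiteness) h1

lemma err_nonneg {X : Type*} [MeasurableSpace X] (D : Measure X) (f h : X → Bool) :
    0 ≤ err D f h := ENNReal.toReal_nonneg

lemma err_le_one {X : Type*} [MeasurableSpace X] (D : Measure X)
    [IsProbabilityMeasure D] (f h : X → Bool) : err D f h ≤ 1 := by
  have h1 : D {x | h x ≠ f x} ≤ 1 := prob_le_one
  have := ENNReal.toReal_mono (by simp) h1
  simpa [err] using this

lemma err_triangle {X : Type*} [MeasurableSpace X] (D : Measure X) [IsFiniteMeasure D]
    (f h h' : X → Bool) :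
    err D f h ≤ (D {x | h x ≠ h' x}).toReal + err D f h' := by
  refine tri_measure D (fun x hx => ?_)
  by_cases hd : h x = h' x
  · right; simp only [Set.mem_setOf_eq] at hx ⊢; rw [← hd]; exact hx
  · left; exact hd

lemma disagree_triangle {X : Type*} [MeasurableSpace X] (D : Measure X) [IsFiniteMeasure D]
    (f h h' : X → Bool) :
    (D {x | h x ≠ h' x}).toReal ≤ err D f h + err D f h' := by
  refine tri_measure D (fun x hx => ?_)
  by_cases hd : h x = f x
  · right; simp only [Set.mem_setOf_eq] at hx ⊢
    intro hc; exact hx (hd.trans hc.symm)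
  · left; exact hd

lemma dHDH_bddAbove {X : Type*} [MeasurableSpace X] (H : Set (X → Bool))
    (P Q : Measure X) [IsProbabilityMeasure P] [IsProbabilityMeasure Q] :
    BddAbove {r : ℝ | ∃ h ∈ H, ∃ h' ∈ H,
      r = |(P {x | h x ≠ h' x}).toReal - (Q {x | h x ≠ h' x}).toReal|} := by
  refine ⟨1, fun r hr => ?_⟩
  obtain ⟨h, -, h', -, rfl⟩ := hr
  have hP : (P {x | h x ≠ h' x}).toReal ≤ 1 := by
    have := ENNReal.toReal_mono (by simp) (prob_le_one (μ := P) (s := {x | h x ≠ h' x}))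
    simpa using this
  have hQ : (Q {x | h x ≠ h' x}).toReal ≤ 1 := by
    have := ENNReal.toReal_mono (by simp) (prob_le_one (μ := Q) (s := {x | h x ≠ h' x}))
    simpa using this
  have hP0 : (0:ℝ) ≤ (P {x | h x ≠ h' x}).toReal := ENNReal.toReal_nonneg
  have hQ0 : (0:ℝ) ≤ (Q {x | h x ≠ h' x}).toReal := ENNReal.toReal_nonneg
  rw [abs_le]; constructor <;> linarith

/-- Single-source domain adaptation bound. -/
lemma single_source_bound {X : Type*} [MeasurableSpace X] (H : Set (X → Bool))
    (P Q : Measure X) [IsProbabilityMeasure P] [IsProbabilityMeasure Q]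
    (f : X → Bool) {h : X → Bool} (hh : h ∈ H) :
    err Q f h ≤ idealJointError H P Q f + err P f h + (1/2) * dHDH H P Q := by
  have key : ∀ h' ∈ H,
      err Q f h - err P f h - (1/2) * dHDH H P Q ≤ err P f h' + err Q f h' := by
    intro h' hh'
    have t1 : err Q f h ≤ (Q {x | h x ≠ h' x}).toReal + err Q f h' :=
      err_triangle Q f h h'
    have t2 : |(P {x | h x ≠ h' x}).toReal - (Q {x | h x ≠ h' x}).toReal|
        ≤ (1/2) * dHDH H P Q := by
      have hm := le_csSup (dHDH_bddAbove H P Q) ⟨h, hh, h', hh', rfl⟩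
      unfold dHDH; linarith
    have t3 : (P {x | h x ≠ h' x}).toReal ≤ err P f h + err P f h' :=
      disagree_triangle P f h h'
    have t4 : (Q {x | h x ≠ h' x}).toReal - (P {x | h x ≠ h' x}).toReal
        ≤ (1/2) * dHDH H P Q := by
      have := neg_abs_le ((P {x | h x ≠ h' x}).toReal - (Q {x | h x ≠ h' x}).toReal)
      linarith
    linarith
  have hne : {r : ℝ | ∃ h' ∈ H, r = err P f h' + err Q f h'}.Nonempty :=
    ⟨_, h, hh, rfl⟩
  have := le_csInf hne (fun b hb => by
    obtain ⟨h', hh', rfl⟩ := hb; exact key h' hh')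
  unfold idealJointError; linarith

lemma ije_le_two {X : Type*} [MeasurableSpace X] (H : Set (X → Bool))
    (P Q : Measure X) [IsProbabilityMeasure P] [IsProbabilityMeasure Q]
    (f : X → Bool) : idealJointError H P Q f ≤ 2 := by
  unfold idealJointError
  rcases H.eq_empty_or_nonempty with rfl | ⟨h0, hh0⟩
  · simp [Real.sInf_empty]
  · have hbdd : BddBelow {r : ℝ | ∃ h ∈ H, r = err P f h + err Q f h} := by
      refine ⟨0, fun r hr => ?_⟩
      obtain ⟨h, -, rfl⟩ := hr
      have := err_nonneg P f h; have := err_nonneg Q f h; linarith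
    have h1 := csInf_le hbdd (⟨h0, hh0, rfl⟩ :
      err P f h0 + err Q f h0 ∈ {r : ℝ | ∃ h ∈ H, r = err P f h + err Q f h})
    have := err_le_one P f h0; have := err_le_one Q f h0
    linarith

lemma mix_prob {X : Type*} [MeasurableSpace X] {M : ℕ}
    (P : Fin M → Measure X) [∀ i, IsProbabilityMeasure (P i)]
    (φ : Fin M → ℝ≥0) (hφ : ∑ i, φ i = 1) :
    IsProbabilityMeasure (∑ i, (φ i : ℝ≥0∞) • P i) := by
  constructor
  rw [Measure.finset_sum_apply]
  simp only [Measure.smul_apply, smul_eq_mul, measure_univ, mul_one]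
  rw [← ENNReal.coe_finset_sum, hφ, ENNReal.coe_one]

lemma err_mix {X : Type*} [MeasurableSpace X] {M : ℕ}
    (P : Fin M → Measure X) [∀ i, IsProbabilityMeasure (P i)]
    (φ : Fin M → ℝ≥0) (f h : X → Bool) :
    err (∑ i, (φ i : ℝ≥0∞) • P i) f h = ∑ i, (φ i : ℝ) * err (P i) f h := by
  unfold err
  rw [Measure.finset_sum_apply]
  rw [ENNReal.toReal_sum (fun i _ => by
    simp only [Measure.smul_apply, smul_eq_mul]
    exact ENNReal.mul_ne_top ENNReal.coe_ne_top (measure_ne_top _ _))]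
  refine Finset.sum_congr rfl (fun i _ => ?_)
  simp [Measure.smul_apply, ENNReal.toReal_mul]

/-- Multi-source generalization bound.  Given sources `P i`, mixture weights
`φ`, and a set `O` of distributions each close (in `HΔH`-divergence) to the
mixture `∑ i, φ i • P i`, the target error of any `h ∈ H` is bounded by
`λ' + ∑ i φ i ε_{P i}(h) + (1/2) min_{S ∈ O} d_{HΔH}(S, Q)
 + (1/2) max_{i,j} d_{HΔH}(P i, P j)`, where `λ'` collects the errors of the
ideal joint hypotheses arising in the two applications of the single-source
bound. -/
theorem multi_source_dg_bound {X : Type*} [MeasurableSpace X]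
    (H : Set (X → Bool)) {M : ℕ} (hM : 0 < M)
    (P : Fin M → Measure X) [∀ i, IsProbabilityMeasure (P i)]
    (Q : Measure X) [IsProbabilityMeasure Q]
    (f : X → Bool)
    (φ : Fin M → ℝ≥0) (hφ : ∑ i, φ i = 1)
    (O : Set (Measure X)) (hOne : O.Nonempty)
    (hOprob : ∀ S ∈ O, IsProbabilityMeasure S)
    (hO : ∀ S ∈ O,
      dHDH H (∑ i, (φ i : ℝ≥0∞) • P i) S ≤
        ⨆ p : Fin M × Fin M, dHDH H (P p.1) (P p.2))
    (lam' : ℝ)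
    (hlam' : lam' = sSup {r : ℝ | ∃ S ∈ O,
      r = idealJointError H S Q f
        + idealJointError H (∑ i, (φ i : ℝ≥0∞) • P i) S f}) :
    ∀ h ∈ H, err Q f h ≤
      lam' + ∑ i, (φ i : ℝ) * err (P i) f h
        + (1 / 2) * sInf {r : ℝ | ∃ S ∈ O, r = dHDH H S Q}
        + (1 / 2) * ⨆ p : Fin M × Fin M, dHDH H (P p.1) (P p.2) := by
  
  intro h hh
  set Pmix : Measure X := ∑ i, (φ i : ℝ≥0∞) • P i with hPmix
  haveI : IsProbabilityMeasure Pmix := mix_prob P φ hφ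
  set sup : ℝ := ⨆ p : Fin M × Fin M, dHDH H (P p.1) (P p.2) with hsup
  -- lam' bounds each λ_S
  have hlamS : ∀ S ∈ O, idealJointError H S Q f + idealJointError H Pmix S f ≤ lam' := by
    intro S hS
    rw [hlam']
    refine le_csSup ⟨4, fun r hr => ?_⟩ ⟨S, hS, rfl⟩
    obtain ⟨S', hS', rfl⟩ := hr
    haveI := hOprob S' hS'
    have h1 := ije_le_two H S' Q f
    have h2 := ije_le_two H Pmix S' f
    linarith
  -- per-S bound
  have perS : ∀ S ∈ O, err Q f h ≤
      lam' + ∑ i, (φ i : ℝ) * err (P i) f h + (1/2) * dHDH H S Q + (1/2) * sup := by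
    intro S hS
    haveI := hOprob S hS
    have b1 : err Q f h ≤ idealJointError H S Q f + err S f h + (1/2) * dHDH H S Q :=
      single_source_bound H S Q f hh
    have b2 : err S f h ≤ idealJointError H Pmix S f + err Pmix f h
        + (1/2) * dHDH H Pmix S := single_source_bound H Pmix S f hh
    have b3 : dHDH H Pmix S ≤ sup := hO S hS
    have b4 : err Pmix f h = ∑ i, (φ i : ℝ) * err (P i) f h := err_mix P φ f h
    have b5 := hlamS S hS
    linarith
  -- take the inf over S
  have hDne : {r : ℝ | ∃ S ∈ O, r = dHDH H S Q}.Nonempty := by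
    obtain ⟨S, hS⟩ := hOne; exact ⟨_, S, hS, rfl⟩
  have hinf : 2 * (err Q f h - lam' - ∑ i, (φ i : ℝ) * err (P i) f h - (1/2) * sup)
      ≤ sInf {r : ℝ | ∃ S ∈ O, r = dHDH H S Q} := by
    refine le_csInf hDne (fun b hb => ?_)
    obtain ⟨S, hS, rfl⟩ := hb
    have := perS S hS
    linarith
  linarith
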